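/- arXiv:0906.2821 — 2 statements merged into one kernel-verified Lean document; each statement's English description precedes it below -/
import Mathlib

section
/- The homological-equation fixed point map T(P)(x) = I - ∫ₓ^∞ e^{A₊(x-y)} (A(y) - A₊) P(y) e^{-A₊(x-y)} dy is a contraction on L^∞([M,∞); Mat(n,ℂ)) for M sufficiently large, provided ‖A(x) - A₊‖ ≤ C e^{-θ x} with θ larger than twice the spectral spread of A₊. -/
open MeasureTheory NormedSpace Set Filter Topology

set_option synthInstance.maxHeartbeats 400000
set_option maxHeartbeats 1000000
noncomputable section HomEq

variable {n : ℕ}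

local notation "EE" => EuclideanSpace ℂ (Fin n) →L[ℂ] EuclideanSpace ℂ (Fin n)

def ratAlgEE : NormedAlgebra ℚ EE := NormedAlgebra.restrictScalars ℚ ℂ _

attribute [local instance] ratAlgEE

lemma intExpNeg (a : ℝ) {b : ℝ} (hb : 0 < b) :
    ∫ y in Set.Ioi a, Real.exp (-b * y) = Real.exp (-b * a) / b := by
  have h1 : ∀ y ∈ Set.Ici a, HasDerivAt (fun u => -Real.exp (-b * u) / b)
      (Real.exp (-b * y)) y := by
    intro y _
    simpa [hb.ne'] using (((hasDerivAt_id y).const_mul (-b)).exp).neg.div_const b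
  have h2 : Tendsto (fun u => -Real.exp (-b * u) / b) atTop (𝓝 ((-0 : ℝ) / b)) := by
    refine Tendsto.div_const (Tendsto.neg ?_) _
    exact Real.tendsto_exp_atBot.comp (tendsto_id.const_mul_atTop_of_neg (by linarith))
  rw [MeasureTheory.integral_Ioi_of_hasDerivAt_of_tendsto' h1
    (exp_neg_integrableOn_Ioi a hb) h2]
  ring

lemma expSplit (Aplus : EE) (s t : ℝ) :
    exp ((s + t) • Aplus) = exp (s • Aplus) * exp (t • Aplus) := by
  have key : ∀ r : ℝ, r • Aplus = (r : ℂ) • Aplus := fun r => (algebraMap_smul ℂ r Aplus).symm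
  have h : ((s : ℂ) + (t : ℂ)) • Aplus = (s : ℂ) • Aplus + (t : ℂ) • Aplus := by module
  rw [key, key, key, show ((s + t : ℝ) : ℂ) = (s : ℂ) + (t : ℂ) by push_cast; ring, h]
  exact exp_add_of_commute (((Commute.refl Aplus).smul_right (t:ℂ)).smul_left (s:ℂ))

def FF (A : ℝ → EE) (Aplus : EE) (P : ℝ → EE) (x y : ℝ) : EE :=
  exp ((x - y) • Aplus) * ((A y - Aplus) * (P y * exp ((y - x) • Aplus)))

lemma FF_shift (A : ℝ → EE) (Aplus : EE) (P : ℝ → EE) (x y : ℝ) :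
    FF A Aplus P x y = exp (x • Aplus) * (FF A Aplus P 0 y * exp ((-x) • Aplus)) := by
  unfold FF
  have h1 : exp ((x - y) • Aplus) = exp (x • Aplus) * exp ((-y) • Aplus) := by
    rw [← expSplit]; norm_num [sub_eq_add_neg]
  have h2 : exp ((y - x) • Aplus) = exp (y • Aplus) * exp ((-x) • Aplus) := by
    rw [← expSplit]; norm_num [sub_eq_add_neg]
  have h3 : exp ((0 - y) • Aplus) = exp ((-y) • Aplus) := by norm_num
  have h4 : exp ((y - 0) • Aplus) = exp (y • Aplus) := by norm_num
  rw [h1, h2, h3, h4]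
  noncomm_ring

lemma FF_sub (A : ℝ → EE) (Aplus : EE) (P Q : ℝ → EE) (x y : ℝ) :
    FF A Aplus P x y - FF A Aplus Q x y = FF A Aplus (fun z => P z - Q z) x y := by
  unfold FF
  rw [← mul_sub, ← mul_sub, ← sub_mul]

variable {A : ℝ → EuclideanSpace ℂ (Fin n) →L[ℂ] EuclideanSpace ℂ (Fin n)}
  {Aplus : EuclideanSpace ℂ (Fin n) →L[ℂ] EuclideanSpace ℂ (Fin n)} {K μ C θ M B : ℝ}
  {P : ℝ → EuclideanSpace ℂ (Fin n) →L[ℂ] EuclideanSpace ℂ (Fin n)}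

lemma FF_norm_bound (hK : 0 < K) (hC : 0 < C)
    (hexp : ∀ t : ℝ, ‖exp (t • Aplus)‖ * ‖exp (-(t • Aplus))‖ ≤ K * Real.exp (μ * |t|))
    (hconv : ∀ x : ℝ, 0 ≤ x → ‖A x - Aplus‖ ≤ C * Real.exp (-θ * x))
    (hB : 0 ≤ B) (hM : 0 ≤ M)
    (hPB : ∀ y, M ≤ y → ‖P y‖ ≤ B) {x y : ℝ} (hy : M ≤ y) :
    ‖FF A Aplus P x y‖ ≤ K * C * B * (Real.exp (μ * |x - y|) * Real.exp (-θ * y)) := by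
  have hy0 : (0:ℝ) ≤ y := le_trans hM hy
  have e2 : exp ((y - x) • Aplus) = exp (-((x - y) • Aplus)) := by
    congr 1
    module
  unfold FF
  rw [e2]
  set a := exp ((x - y) • Aplus) with ha
  set d := exp (-((x - y) • Aplus)) with hd
  have h1 : ‖a * ((A y - Aplus) * (P y * d))‖ ≤ ‖a‖ * ‖d‖ * (‖A y - Aplus‖ * ‖P y‖) := by
    calc ‖a * ((A y - Aplus) * (P y * d))‖ ≤ ‖a‖ * ‖(A y - Aplus) * (P y * d)‖ :=
          norm_mul_le _ _
      _ ≤ ‖a‖ * (‖A y - Aplus‖ * ‖P y * d‖) :=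
          mul_le_mul_of_nonneg_left (norm_mul_le _ _) (norm_nonneg _)
      _ ≤ ‖a‖ * (‖A y - Aplus‖ * (‖P y‖ * ‖d‖)) :=
          mul_le_mul_of_nonneg_left
            (mul_le_mul_of_nonneg_left (norm_mul_le _ _) (norm_nonneg _)) (norm_nonneg _)
      _ = ‖a‖ * ‖d‖ * (‖A y - Aplus‖ * ‖P y‖) := by ring
  refine h1.trans ?_
  have h2 : ‖a‖ * ‖d‖ * (‖A y - Aplus‖ * ‖P y‖) ≤
      (K * Real.exp (μ * |x - y|)) * ((C * Real.exp (-θ * y)) * B) := by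
    apply mul_le_mul (hexp (x - y))
    · exact mul_le_mul (hconv y hy0) (hPB y hy) (norm_nonneg _) (by positivity)
    · positivity
    · positivity
  refine h2.trans_eq ?_
  ring

lemma FF_integrableOn (hA : ContinuousOn A (Set.Ici 0)) (hK : 0 < K) (hμ : 0 ≤ μ)
    (hC : 0 < C) (hθμ : μ < θ)
    (hexp : ∀ t : ℝ, ‖exp (t • Aplus)‖ * ‖exp (-(t • Aplus))‖ ≤ K * Real.exp (μ * |t|))
    (hconv : ∀ x : ℝ, 0 ≤ x → ‖A x - Aplus‖ ≤ C * Real.exp (-θ * x))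
    (hB : 0 ≤ B) (hM : 0 ≤ M) (hPc : ContinuousOn P (Set.Ici M))
    (hPB : ∀ y, M ≤ y → ‖P y‖ ≤ B) (x : ℝ) :
    IntegrableOn (FF A Aplus P x) (Set.Ici M) := by
  have hcont : ContinuousOn (FF A Aplus P x) (Set.Ici M) := by
    unfold FF
    refine ContinuousOn.mul ?_ (ContinuousOn.mul ?_ (ContinuousOn.mul hPc ?_))
    · exact (exp_continuous.comp
        ((continuous_const.sub continuous_id).smul continuous_const)).continuousOn
    · exact (hA.mono (Set.Ici_subset_Ici.mpr hM)).sub continuousOn_const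
    · exact (exp_continuous.comp
        ((continuous_id.sub continuous_const).smul continuous_const)).continuousOn
  refine Integrable.mono'
    (g := fun y => (K * C * B * Real.exp (μ * |x|)) * Real.exp (-(θ - μ) * y)) ?_ ?_ ?_
  · have := (exp_neg_integrableOn_Ioi M (show (0:ℝ) < θ - μ by linarith)).const_mul
      (K * C * B * Real.exp (μ * |x|))
    exact (integrableOn_Ici_iff_integrableOn_Ioi (f := fun y =>
      (K * C * B * Real.exp (μ * |x|)) * Real.exp (-(θ - μ) * y))).mpr this
  · exact hcont.aestronglyMeasurable measurableSet_Ici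
  · rw [ae_restrict_iff' measurableSet_Ici]
    filter_upwards with y hy
    refine (FF_norm_bound hK hC hexp hconv hB hM hPB hy).trans ?_
    have hy0 : (0:ℝ) ≤ y := le_trans hM hy
    have habs : |x - y| ≤ |x| + y := by
      calc |x - y| ≤ |x| + |y| := abs_sub _ _
        _ = |x| + y := by rw [abs_of_nonneg hy0]
    have : Real.exp (μ * |x - y|) * Real.exp (-θ * y) ≤
        Real.exp (μ * |x|) * Real.exp (-(θ - μ) * y) := by
      rw [← Real.exp_add, ← Real.exp_add]
      apply Real.exp_le_exp.2
      nlinarith [mul_le_mul_of_nonneg_left habs hμ]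
    calc K * C * B * (Real.exp (μ * |x - y|) * Real.exp (-θ * y))
        ≤ K * C * B * (Real.exp (μ * |x|) * Real.exp (-(θ - μ) * y)) := by
          gcongr
      _ = (K * C * B * Real.exp (μ * |x|)) * Real.exp (-(θ - μ) * y) := by ring

lemma FF_continuousOn (hA : ContinuousOn A (Set.Ici 0)) (hM : 0 ≤ M)
    (hPc : ContinuousOn P (Set.Ici M)) (x : ℝ) :
    ContinuousOn (FF A Aplus P x) (Set.Ici M) := by
  unfold FF
  refine ContinuousOn.mul ?_ (ContinuousOn.mul ?_ (ContinuousOn.mul hPc ?_))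
  · exact (exp_continuous.comp
      ((continuous_const.sub continuous_id).smul continuous_const)).continuousOn
  · exact (hA.mono (Set.Ici_subset_Ici.mpr hM)).sub continuousOn_const
  · exact (exp_continuous.comp
      ((continuous_id.sub continuous_const).smul continuous_const)).continuousOn

lemma FF_integral_bound (hK : 0 < K) (hμ : 0 ≤ μ) (hC : 0 < C) (hθμ : μ < θ)
    (hexp : ∀ t : ℝ, ‖exp (t • Aplus)‖ * ‖exp (-(t • Aplus))‖ ≤ K * Real.exp (μ * |t|))
    (hconv : ∀ x : ℝ, 0 ≤ x → ‖A x - Aplus‖ ≤ C * Real.exp (-θ * x))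
    (hB : 0 ≤ B) (hM : 0 ≤ M)
    (hPB : ∀ y, M ≤ y → ‖P y‖ ≤ B) {x : ℝ} (hx : M ≤ x) :
    ‖∫ y in Set.Ici x, FF A Aplus P x y‖ ≤ K * C * B * Real.exp (-θ * x) / (θ - μ) := by
  have hθ : (0:ℝ) < θ - μ := by linarith
  have hintg : Integrable (fun y => (K * C * B * Real.exp (-μ * x)) * Real.exp (-(θ - μ) * y))
      (volume.restrict (Set.Ici x)) := by
    have := (exp_neg_integrableOn_Ioi x hθ).const_mul (K * C * B * Real.exp (-μ * x))
    exact (integrableOn_Ici_iff_integrableOn_Ioi (f := fun y =>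
      (K * C * B * Real.exp (-μ * x)) * Real.exp (-(θ - μ) * y))).mpr this
  have hb : ‖∫ y in Set.Ici x, FF A Aplus P x y‖ ≤
      ∫ y in Set.Ici x, (K * C * B * Real.exp (-μ * x)) * Real.exp (-(θ - μ) * y) := by
    refine norm_integral_le_of_norm_le hintg ?_
    rw [ae_restrict_iff' measurableSet_Ici]
    filter_upwards with y hy
    have hMy : M ≤ y := le_trans hx hy
    refine (FF_norm_bound hK hC hexp hconv hB hM hPB hMy).trans_eq ?_
    have habs : |x - y| = y - x := by
      rw [abs_sub_comm, abs_of_nonneg (sub_nonneg.2 hy)]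
    have hcomb : Real.exp (μ * (y - x)) * Real.exp (-θ * y) =
        Real.exp (-μ * x) * Real.exp (-(θ - μ) * y) := by
      rw [← Real.exp_add, ← Real.exp_add]; congr 1; ring
    rw [habs, hcomb]; ring
  refine hb.trans_eq ?_
  rw [MeasureTheory.integral_Ici_eq_integral_Ioi, MeasureTheory.integral_const_mul,
    intExpNeg x hθ]
  have hee : Real.exp (-μ * x) * Real.exp (-(θ - μ) * x) = Real.exp (-θ * x) := by
    rw [← Real.exp_add]; congr 1; ring
  rw [show (K * C * B * Real.exp (-μ * x)) * (Real.exp (-(θ - μ) * x) / (θ - μ)) =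
    K * C * B * (Real.exp (-μ * x) * Real.exp (-(θ - μ) * x)) / (θ - μ) by ring, hee]

lemma GG_sub (hA : ContinuousOn A (Set.Ici 0)) (hK : 0 < K) (hμ : 0 ≤ μ)
    (hC : 0 < C) (hθμ : μ < θ)
    (hexp : ∀ t : ℝ, ‖exp (t • Aplus)‖ * ‖exp (-(t • Aplus))‖ ≤ K * Real.exp (μ * |t|))
    (hconv : ∀ x : ℝ, 0 ≤ x → ‖A x - Aplus‖ ≤ C * Real.exp (-θ * x))
    (hB : 0 ≤ B) (hM : 0 ≤ M) (hPc : ContinuousOn P (Set.Ici M))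
    (hPB : ∀ y, M ≤ y → ‖P y‖ ≤ B) {x₁ x₂ : ℝ} (h₁ : M ≤ x₁) (h₁₂ : x₁ ≤ x₂) :
    (∫ y in Set.Ici x₁, FF A Aplus P 0 y) - (∫ y in Set.Ici x₂, FF A Aplus P 0 y)
      = ∫ y in Set.Ioc x₁ x₂, FF A Aplus P 0 y := by
  have hg : IntegrableOn (FF A Aplus P 0) (Set.Ici M) :=
    FF_integrableOn hA hK hμ hC hθμ hexp hconv hB hM hPc hPB 0
  have h₂ : M ≤ x₂ := le_trans h₁ h₁₂
  have split : (∫ y in Set.Ici x₁, FF A Aplus P 0 y) =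
      (∫ y in Set.Ioc x₁ x₂, FF A Aplus P 0 y) + ∫ y in Set.Ici x₂, FF A Aplus P 0 y := by
    rw [MeasureTheory.integral_Ici_eq_integral_Ioi,
      MeasureTheory.integral_Ici_eq_integral_Ioi (x := x₂), ← Set.Ioc_union_Ioi_eq_Ioi h₁₂]
    exact MeasureTheory.setIntegral_union (Set.Ioc_disjoint_Ioi le_rfl) measurableSet_Ioi
      (hg.mono_set (fun y hy => le_trans h₁ (le_of_lt hy.1)))
      (hg.mono_set (fun y hy => le_trans h₂ (le_of_lt hy)))
  rw [split]; abel

lemma TP_continuousOn (hA : ContinuousOn A (Set.Ici 0)) (hK : 0 < K) (hμ : 0 ≤ μ)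
    (hC : 0 < C) (hθμ : μ < θ)
    (hexp : ∀ t : ℝ, ‖exp (t • Aplus)‖ * ‖exp (-(t • Aplus))‖ ≤ K * Real.exp (μ * |t|))
    (hconv : ∀ x : ℝ, 0 ≤ x → ‖A x - Aplus‖ ≤ C * Real.exp (-θ * x))
    (hB : 0 ≤ B) (hM : 0 ≤ M) (hPc : ContinuousOn P (Set.Ici M))
    (hPB : ∀ y, M ≤ y → ‖P y‖ ≤ B) :
    ContinuousOn (fun x => (1 : EuclideanSpace ℂ (Fin n) →L[ℂ] EuclideanSpace ℂ (Fin n))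
      - ∫ y in Set.Ici x, FF A Aplus P x y) (Set.Ici M) := by
  have hθ : (0:ℝ) < θ - μ := by linarith
  have hg : IntegrableOn (FF A Aplus P 0) (Set.Ici M) :=
    FF_integrableOn hA hK hμ hC hθμ hexp hconv hB hM hPc hPB 0
  set GG := fun x => ∫ y in Set.Ici x, FF A Aplus P 0 y with hGG
  set L₀ : ℝ := K * C * B * Real.exp ((μ - θ) * M) with hL₀
  have hL₀0 : 0 ≤ L₀ := by positivity
  -- pointwise bound
  have hptw : ∀ y, M ≤ y → ‖FF A Aplus P 0 y‖ ≤ L₀ := by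
    intro y hy
    refine (FF_norm_bound hK hC hexp hconv hB hM hPB hy).trans ?_
    have hy0 : (0:ℝ) ≤ y := le_trans hM hy
    have habs : |(0:ℝ) - y| = y := by rw [zero_sub, abs_neg, abs_of_nonneg hy0]
    rw [habs, ← Real.exp_add, hL₀]
    have : (μ - θ) * y ≤ (μ - θ) * M := mul_le_mul_of_nonpos_left hy (by linarith)
    have h2 : μ * y + -θ * y ≤ (μ - θ) * M := by nlinarith
    have h3 : Real.exp (μ * y + -θ * y) ≤ Real.exp ((μ - θ) * M) := Real.exp_le_exp.2 h2
    have hKCB : 0 ≤ K * C * B := by positivity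
    exact mul_le_mul_of_nonneg_left h3 hKCB
  -- Lipschitz bound
  have hlip : ∀ x₁ ∈ Set.Ici M, ∀ x₂ ∈ Set.Ici M, x₁ ≤ x₂ →
      ‖GG x₁ - GG x₂‖ ≤ L₀ * (x₂ - x₁) := by
    intro x₁ h₁ x₂ h₂ h₁₂
    rw [hGG]
    rw [GG_sub hA hK hμ hC hθμ hexp hconv hB hM hPc hPB h₁ h₁₂]
    have hsub : Set.Ioc x₁ x₂ ⊆ Set.Ici M := fun y hy => le_trans h₁ (le_of_lt hy.1)
    have hmeas : volume (Set.Ioc x₁ x₂) < ⊤ := measure_Ioc_lt_top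
    have := MeasureTheory.norm_setIntegral_le_of_norm_le_const (μ := volume)
      (f := FF A Aplus P 0) (s := Set.Ioc x₁ x₂) (C := L₀) hmeas
      (fun y hy => hptw y (hsub hy))
    refine this.trans_eq ?_
    rw [Real.volume_real_Ioc, max_eq_left (sub_nonneg.2 h₁₂)]
  have hGGcont : ContinuousOn GG (Set.Ici M) := by
    refine LipschitzOnWith.continuousOn (K := L₀.toNNReal)
      (LipschitzOnWith.of_dist_le_mul ?_)
    intro x₁ h₁ x₂ h₂
    rw [Real.coe_toNNReal L₀ hL₀0, dist_eq_norm, Real.dist_eq]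
    rcases le_total x₁ x₂ with h | h
    · rw [abs_of_nonpos (by linarith), neg_sub]
      exact hlip x₁ h₁ x₂ h₂ h
    · rw [abs_of_nonneg (by linarith), ← norm_neg, neg_sub]
      exact hlip x₂ h₂ x₁ h₁ h
  -- rewrite the integral
  have heq : ∀ x ∈ Set.Ici M, (1 : EuclideanSpace ℂ (Fin n) →L[ℂ] EuclideanSpace ℂ (Fin n))
      - ∫ y in Set.Ici x, FF A Aplus P x y
      = 1 - exp (x • Aplus) * GG x * exp ((-x) • Aplus) := by
    intro x hx
    congr 1
    set a := exp (x • Aplus)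
    set b := exp ((-x) • Aplus)
    have hpt : ∀ y, FF A Aplus P x y =
        (ContinuousLinearMap.mulLeftRight ℂ _ a b) (FF A Aplus P 0 y) := by
      intro y
      rw [ContinuousLinearMap.mulLeftRight_apply, FF_shift, mul_assoc]
    calc (∫ y in Set.Ici x, FF A Aplus P x y)
        = ∫ y in Set.Ici x, (ContinuousLinearMap.mulLeftRight ℂ _ a b)
            (FF A Aplus P 0 y) := by simp_rw [hpt]
      _ = (ContinuousLinearMap.mulLeftRight ℂ _ a b) (GG x) :=
          ContinuousLinearMap.integral_comp_comm _
            (hg.mono_set (Set.Ici_subset_Ici.mpr hx))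
      _ = a * GG x * b := ContinuousLinearMap.mulLeftRight_apply ℂ _ a b (GG x)
  refine ContinuousOn.congr ?_ heq
  refine continuousOn_const.sub (ContinuousOn.mul (ContinuousOn.mul ?_ hGGcont) ?_)
  · exact (exp_continuous.comp (continuous_id.smul continuous_const)).continuousOn
  · exact (exp_continuous.comp (continuous_id.neg.smul continuous_const)).continuousOn

end HomEq


/-- The homological-equation fixed point map
`T(P)(x) = I - ∫ₓ^∞ e^{A₊(x-y)} (A(y) - A₊) P(y) e^{-A₊(x-y)} dy`
is a contraction on the unit ball about the constant function `I` in
`L^∞([M,∞))` for `M` sufficiently large, provided `‖A(x) - A₊‖ ≤ C e^{-θ x}`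
with `θ > μ`, where `‖e^{A₊ t}‖ ‖e^{-A₊ t}‖ ≤ K e^{μ |t|}`; hence it has a
unique fixed point there. -/
theorem stmt4 (n : ℕ)
    (A : ℝ → (EuclideanSpace ℂ (Fin n) →L[ℂ] EuclideanSpace ℂ (Fin n)))
    (Aplus : EuclideanSpace ℂ (Fin n) →L[ℂ] EuclideanSpace ℂ (Fin n))
    (hA : ContinuousOn A (Set.Ici 0))
    (K μ C θ : ℝ) (hK : 0 < K) (hμ : 0 ≤ μ) (hC : 0 < C) (hθμ : μ < θ)
    (hexp : ∀ t : ℝ, ‖exp (t • Aplus)‖ * ‖exp (-(t • Aplus))‖ ≤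
      K * Real.exp (μ * |t|))
    (hconv : ∀ x : ℝ, 0 ≤ x → ‖A x - Aplus‖ ≤ C * Real.exp (-θ * x)) :
    ∃ M : ℝ, 0 ≤ M ∧
      ∀ T : (ℝ → (EuclideanSpace ℂ (Fin n) →L[ℂ] EuclideanSpace ℂ (Fin n))) →
            ℝ → (EuclideanSpace ℂ (Fin n) →L[ℂ] EuclideanSpace ℂ (Fin n)),
        (∀ P x, T P x = 1 - ∫ y in Set.Ici x,
            exp ((x - y) • Aplus) * ((A y - Aplus) *
              (P y * exp ((y - x) • Aplus)))) →
        -- `T` maps the closed unit ball about the constant function `I` into itself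
        (∀ P, ContinuousOn P (Set.Ici M) → (∀ y, M ≤ y → ‖P y - 1‖ ≤ 1) →
            ∀ x, M ≤ x → ‖T P x - 1‖ ≤ 1) ∧
        -- `T` is a contraction with respect to the sup norm on `[M,∞)`
        (∃ c : ℝ, 0 ≤ c ∧ c < 1 ∧
          ∀ P Q, ContinuousOn P (Set.Ici M) → ContinuousOn Q (Set.Ici M) →
            (∀ y, M ≤ y → ‖P y - 1‖ ≤ 1) → (∀ y, M ≤ y → ‖Q y - 1‖ ≤ 1) →
            ∀ K' : ℝ, (∀ y, M ≤ y → ‖P y - Q y‖ ≤ K') →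
              ∀ x, M ≤ x → ‖T P x - T Q x‖ ≤ c * K') ∧
        -- hence `T` has a unique fixed point in the ball
        (∃ P, ContinuousOn P (Set.Ici M) ∧ (∀ y, M ≤ y → ‖P y - 1‖ ≤ 1) ∧
          (∀ x, M ≤ x → T P x = P x) ∧
          ∀ Q, ContinuousOn Q (Set.Ici M) → (∀ y, M ≤ y → ‖Q y - 1‖ ≤ 1) →
            (∀ x, M ≤ x → T Q x = Q x) → ∀ x, M ≤ x → Q x = P x) := by
  classical
  have hθ0 : (0:ℝ) < θ := lt_of_le_of_lt hμ hθμ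
  have hθμ' : (0:ℝ) < θ - μ := by linarith
  set z : ℝ := 2 * K * C / (θ - μ) with hz
  have hz0 : 0 < z := by positivity
  set M : ℝ := max 0 (Real.log z / θ) with hMdef
  have hM0 : (0:ℝ) ≤ M := le_max_left _ _
  have hMlog : Real.log z / θ ≤ M := le_max_right _ _
  have hkey : K * C * Real.exp (-θ * M) / (θ - μ) ≤ 1 / 2 := by
    have h1 : Real.log z ≤ θ * M := by
      rw [div_le_iff₀ hθ0] at hMlog; linarith
    have h2 : z ≤ Real.exp (θ * M) := by
      calc z = Real.exp (Real.log z) := (Real.exp_log hz0).symm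
        _ ≤ Real.exp (θ * M) := Real.exp_le_exp.2 h1
    have hE : (0:ℝ) < Real.exp (θ * M) := Real.exp_pos _
    have h3 : Real.exp (-θ * M) = (Real.exp (θ * M))⁻¹ := by
      rw [← Real.exp_neg]; congr 1; ring
    rw [h3, div_le_div_iff₀ hθμ' (by norm_num : (0:ℝ) < 2)]
    have h4 : 2 * K * C ≤ Real.exp (θ * M) * (θ - μ) := by
      rw [hz, div_le_iff₀ hθμ'] at h2; linarith
    calc K * C * (Real.exp (θ * M))⁻¹ * 2 = (2 * K * C) * (Real.exp (θ * M))⁻¹ := by ring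
      _ ≤ (Real.exp (θ * M) * (θ - μ)) * (Real.exp (θ * M))⁻¹ :=
          mul_le_mul_of_nonneg_right h4 (inv_nonneg.2 hE.le)
      _ = 1 * (θ - μ) := by field_simp
  refine ⟨M, hM0, ?_⟩
  intro T hT
  set c : ℝ := K * C * Real.exp (-θ * M) / (θ - μ) with hc
  have hc0 : 0 ≤ c := by positivity
  have hc2 : c ≤ 1 / 2 := hkey
  have hc1 : c < 1 := by linarith
  have hone : ‖(1 : EuclideanSpace ℂ (Fin n) →L[ℂ] EuclideanSpace ℂ (Fin n))‖ ≤ 1 := by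
    rw [ContinuousLinearMap.one_def]; exact ContinuousLinearMap.norm_id_le
  have hTF : ∀ P x, T P x = 1 - ∫ y in Set.Ici x, FF A Aplus P x y := by
    intro P x; rw [hT]; rfl
  have hmono : ∀ x, M ≤ x → Real.exp (-θ * x) ≤ Real.exp (-θ * M) := by
    intro x hx; exact Real.exp_le_exp.2 (by nlinarith)
  have hnorm2 : ∀ P : ℝ → (EuclideanSpace ℂ (Fin n) →L[ℂ] EuclideanSpace ℂ (Fin n)),
      (∀ y, M ≤ y → ‖P y - 1‖ ≤ 1) → ∀ y, M ≤ y → ‖P y‖ ≤ 2 := by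
    intro P hP1 y hy
    calc ‖P y‖ = ‖(P y - 1) + 1‖ := by rw [sub_add_cancel]
      _ ≤ ‖P y - 1‖ + ‖(1 : EuclideanSpace ℂ (Fin n) →L[ℂ] EuclideanSpace ℂ (Fin n))‖ :=
          norm_add_le _ _
      _ ≤ 1 + 1 := add_le_add (hP1 y hy) hone
      _ = 2 := by norm_num
  -- ball preservation
  have hball : ∀ P, ContinuousOn P (Set.Ici M) → (∀ y, M ≤ y → ‖P y - 1‖ ≤ 1) →
      ∀ x, M ≤ x → ‖T P x - 1‖ ≤ 1 := by
    intro P hPc hP1 x hx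
    have hPB := hnorm2 P hP1
    rw [hTF]
    have hsimp : (1 : EuclideanSpace ℂ (Fin n) →L[ℂ] EuclideanSpace ℂ (Fin n))
        - (∫ y in Set.Ici x, FF A Aplus P x y) - 1 = -(∫ y in Set.Ici x, FF A Aplus P x y) := by
      abel
    rw [hsimp, norm_neg]
    refine (FF_integral_bound hK hμ hC hθμ hexp hconv (by norm_num : (0:ℝ) ≤ 2) hM0 hPB hx).trans ?_
    have := hmono x hx
    calc K * C * 2 * Real.exp (-θ * x) / (θ - μ)
        ≤ K * C * 2 * Real.exp (-θ * M) / (θ - μ) := by gcongr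
      _ = 2 * c := by rw [hc]; ring
      _ ≤ 1 := by linarith
  -- contraction
  have hcontr : ∀ P Q, ContinuousOn P (Set.Ici M) → ContinuousOn Q (Set.Ici M) →
      (∀ y, M ≤ y → ‖P y - 1‖ ≤ 1) → (∀ y, M ≤ y → ‖Q y - 1‖ ≤ 1) →
      ∀ K' : ℝ, (∀ y, M ≤ y → ‖P y - Q y‖ ≤ K') →
        ∀ x, M ≤ x → ‖T P x - T Q x‖ ≤ c * K' := by
    intro P Q hPc hQc hP1 hQ1 K' hK' x hx
    have hK'0 : (0:ℝ) ≤ K' := le_trans (norm_nonneg _) (hK' M le_rfl)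
    have hPint : IntegrableOn (FF A Aplus P x) (Set.Ici x) :=
      (FF_integrableOn hA hK hμ hC hθμ hexp hconv (by norm_num : (0:ℝ) ≤ 2) hM0 hPc
        (hnorm2 P hP1) x).mono_set (Set.Ici_subset_Ici.mpr hx)
    have hQint : IntegrableOn (FF A Aplus Q x) (Set.Ici x) :=
      (FF_integrableOn hA hK hμ hC hθμ hexp hconv (by norm_num : (0:ℝ) ≤ 2) hM0 hQc
        (hnorm2 Q hQ1) x).mono_set (Set.Ici_subset_Ici.mpr hx)
    rw [hTF, hTF]
    have h1 : (1 : EuclideanSpace ℂ (Fin n) →L[ℂ] EuclideanSpace ℂ (Fin n))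
        - (∫ y in Set.Ici x, FF A Aplus P x y)
        - (1 - ∫ y in Set.Ici x, FF A Aplus Q x y)
        = -((∫ y in Set.Ici x, FF A Aplus P x y) - ∫ y in Set.Ici x, FF A Aplus Q x y) := by
      abel
    rw [h1, norm_neg, ← MeasureTheory.integral_sub hPint hQint]
    simp_rw [FF_sub A Aplus P Q x]
    refine (FF_integral_bound hK hμ hC hθμ hexp hconv hK'0 hM0
      (fun y hy => hK' y hy) hx).trans ?_
    have := hmono x hx
    calc K * C * K' * Real.exp (-θ * x) / (θ - μ)
        ≤ K * C * K' * Real.exp (-θ * M) / (θ - μ) := by gcongr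
      _ = c * K' := by rw [hc]; ring
  refine ⟨hball, ⟨c, hc0, hc1, hcontr⟩, ?_⟩
  -- fixed point construction via Banach
  set X := BoundedContinuousFunction (Set.Ici M)
    (EuclideanSpace ℂ (Fin n) →L[ℂ] EuclideanSpace ℂ (Fin n)) with hX
  set one : X := BoundedContinuousFunction.const _ 1 with honedef
  set Ball := Metric.closedBall one 1 with hBall
  haveI : CompleteSpace Ball :=
    (Metric.isClosed_closedBall (x := one) (ε := 1)).completeSpace_coe
  haveI : Nonempty Ball := ⟨⟨one, Metric.mem_closedBall_self (by norm_num)⟩⟩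
  -- extension operator
  set ext := fun (f : X) (x : ℝ) => f ⟨max x M, le_max_right x M⟩ with hext
  have hextc : ∀ f : X, ContinuousOn (ext f) (Set.Ici M) := by
    intro f
    exact (f.continuous.comp ((continuous_id.max continuous_const).subtype_mk _)).continuousOn
  have hexteq : ∀ (f : X) (x : ℝ) (hx : M ≤ x), ext f x = f ⟨x, hx⟩ := by
    intro f x hx
    simp only [hext]
    congr 1
    exact Subtype.ext (max_eq_left hx)
  have hextball : ∀ f : X, f ∈ Ball → ∀ y, M ≤ y → ‖ext f y - 1‖ ≤ 1 := by
    intro f hf y hy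
    have h1 : dist (f ⟨max y M, le_max_right y M⟩) (one ⟨max y M, le_max_right y M⟩)
        ≤ dist f one := BoundedContinuousFunction.dist_coe_le_dist _
    have h2 : dist f one ≤ 1 := Metric.mem_closedBall.1 hf
    have h3 : one ⟨max y M, le_max_right y M⟩ = 1 := rfl
    rw [h3, dist_eq_norm] at h1
    exact le_trans h1 h2
  have hextdist : ∀ f g : X, ∀ y, M ≤ y → ‖ext f y - ext g y‖ ≤ dist f g := by
    intro f g y hy
    rw [← dist_eq_norm]
    exact BoundedContinuousFunction.dist_coe_le_dist _
  -- the map on the ball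
  have hcontT : ∀ f : X, f ∈ Ball → ContinuousOn (fun x => T (ext f) x) (Set.Ici M) := by
    intro f hf
    have := TP_continuousOn hA hK hμ hC hθμ hexp hconv (B := 2) (by norm_num) hM0
      (hextc f) (hnorm2 (ext f) (hextball f hf))
    exact this.congr (fun x _ => hTF (ext f) x)
  have hbndT : ∀ f : X, f ∈ Ball → ∀ z : Set.Ici M, ‖T (ext f) z.1‖ ≤ 2 := by
    intro f hf z
    have h1 : ‖T (ext f) z.1 - 1‖ ≤ 1 := hball (ext f) (hextc f) (hextball f hf) z.1 z.2
    calc ‖T (ext f) z.1‖ = ‖(T (ext f) z.1 - 1) + 1‖ := by rw [sub_add_cancel]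
      _ ≤ ‖T (ext f) z.1 - 1‖ + ‖(1 : EuclideanSpace ℂ (Fin n) →L[ℂ] EuclideanSpace ℂ (Fin n))‖ :=
          norm_add_le _ _
      _ ≤ 1 + 1 := add_le_add h1 hone
      _ = 2 := by norm_num
  have hΦex : ∀ fp : Ball, { q : Ball // ∀ z : Set.Ici M, q.1 z = T (ext fp.1) z.1 } := by
    intro fp
    refine ⟨⟨BoundedContinuousFunction.ofNormedAddCommGroup
      ((Set.Ici M).restrict (fun x => T (ext fp.1) x))
      (hcontT fp.1 fp.2).restrict 2 (fun z => hbndT fp.1 fp.2 z), ?_⟩, fun z => rfl⟩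
    refine Metric.mem_closedBall.2 ((BoundedContinuousFunction.dist_le (by norm_num)).2 ?_)
    intro z
    rw [dist_eq_norm]
    exact hball (ext fp.1) (hextc fp.1) (hextball fp.1 fp.2) z.1 z.2
  set Φ : Ball → Ball := fun fp => (hΦex fp).1 with hΦdef
  have hΦcontr : ContractingWith ⟨c, hc0⟩ Φ := by
    constructor
    · exact NNReal.coe_lt_coe.1 hc1
    · refine LipschitzWith.of_dist_le_mul ?_
      intro fp gp
      rw [Subtype.dist_eq, Subtype.dist_eq]
      refine (BoundedContinuousFunction.dist_le (by positivity)).2 ?_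
      intro z
      rw [(hΦex fp).2 z, (hΦex gp).2 z, dist_eq_norm]
      exact hcontr (ext fp.1) (ext gp.1) (hextc fp.1) (hextc gp.1)
        (hextball fp.1 fp.2) (hextball gp.1 gp.2) (dist fp.1 gp.1)
        (hextdist fp.1 gp.1) z.1 z.2
  set f₀ : Ball := ContractingWith.fixedPoint Φ hΦcontr with hf₀
  have hfix : Φ f₀ = f₀ := hΦcontr.fixedPoint_isFixedPt
  set P₀ := ext f₀.1 with hP₀
  have hP₀c : ContinuousOn P₀ (Set.Ici M) := hextc f₀.1
  have hP₀1 : ∀ y, M ≤ y → ‖P₀ y - 1‖ ≤ 1 := hextball f₀.1 f₀.2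
  have hfp : ∀ x, M ≤ x → T P₀ x = P₀ x := by
    intro x hx
    calc T P₀ x = (Φ f₀).1 ⟨x, hx⟩ := ((hΦex f₀).2 ⟨x, hx⟩).symm
      _ = f₀.1 ⟨x, hx⟩ := by rw [hfix]
      _ = P₀ x := (hexteq f₀.1 x hx).symm
  refine ⟨P₀, hP₀c, hP₀1, hfp, ?_⟩
  intro Q hQc hQ1 hQfix x hx
  have hiter : ∀ k : ℕ, ∀ y, M ≤ y → ‖Q y - P₀ y‖ ≤ 2 * c ^ k := by
    intro k
    induction k with
    | zero =>
      intro y hy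
      have : ‖Q y - P₀ y‖ ≤ 2 := by
        calc ‖Q y - P₀ y‖ = ‖(Q y - 1) - (P₀ y - 1)‖ := by congr 1; abel
          _ ≤ ‖Q y - 1‖ + ‖P₀ y - 1‖ := norm_sub_le _ _
          _ ≤ 2 := by linarith [hQ1 y hy, hP₀1 y hy]
      simpa using this
    | succ k ih =>
      intro y hy
      rw [← hQfix y hy, ← hfp y hy]
      refine (hcontr Q P₀ hQc hP₀c hQ1 hP₀1 (2 * c ^ k) ih y hy).trans_eq ?_
      ring
  have htend : Filter.Tendsto (fun k : ℕ => 2 * c ^ k) Filter.atTop (𝓝 (2 * 0)) :=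
    (tendsto_pow_atTop_nhds_zero_of_lt_one hc0 hc1).const_mul 2
  have h0 : ‖Q x - P₀ x‖ ≤ 2 * 0 :=
    ge_of_tendsto' htend (fun k => hiter k x hx)
  have : ‖Q x - P₀ x‖ ≤ 0 := by linarith
  have := norm_le_zero_iff.1 this
  exact sub_eq_zero.1 this
end

section
/- Weakened spectral gap with L¹ perturbation: if the spectral gap condition min σ(Re M₁) - max σ(Re M₂) ≥ η + α(x) holds with |α|_{L¹} ≤ C₁, then the forward flow of 𝓜(x)Φ := M₂(x)Φ - ΦM₁(x) satisfies ‖solution operator from y to x‖ ≤ C e^{C₁} e^{-η(x-y)} for x > y. -/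
open ContinuousLinearMap Filter MeasureTheory intervalIntegral

section helpers

variable {E F : Type*} [NormedAddCommGroup E] [InnerProductSpace ℂ E]
  [NormedAddCommGroup F] [InnerProductSpace ℂ F]

set_option linter.unusedSectionVars false

/-- Infimum of the real part of the quadratic form of `T` over the unit sphere. -/
noncomputable def qinf (T : E →L[ℂ] E) : ℝ :=
  sInf ((fun v => (inner ℂ (T v) v : ℂ).re) '' Metric.sphere (0:E) 1)

lemma abs_re_inner_le (T : E →L[ℂ] E) (v : E) (hv : ‖v‖ = 1) :
    |(inner ℂ (T v) v : ℂ).re| ≤ ‖T‖ := by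
  have h1 : |(inner ℂ (T v) v : ℂ).re| ≤ ‖(inner ℂ (T v) v : ℂ)‖ := Complex.abs_re_le_norm _
  refine h1.trans ?_
  have := norm_inner_le_norm (𝕜 := ℂ) (T v) v
  calc ‖(inner ℂ (T v) v : ℂ)‖ ≤ ‖T v‖ * ‖v‖ := this
    _ ≤ ‖T‖ * ‖v‖ * ‖v‖ := by gcongr; exact T.le_opNorm v
    _ = ‖T‖ := by rw [hv]; ring

lemma qinf_bddBelow (T : E →L[ℂ] E) :
    BddBelow ((fun v => (inner ℂ (T v) v : ℂ).re) '' Metric.sphere (0:E) 1) := by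
  refine ⟨-‖T‖, ?_⟩
  rintro x ⟨v, hv, rfl⟩
  have := abs_re_inner_le T v (by simpa using hv)
  linarith [neg_abs_le ((inner ℂ (T v) v : ℂ).re)]

lemma qinf_le (T : E →L[ℂ] E) (v : E) (hv : ‖v‖ = 1) :
    qinf T ≤ (inner ℂ (T v) v : ℂ).re :=
  csInf_le (qinf_bddBelow T) ⟨v, by simpa using hv, rfl⟩

variable [Nontrivial E] [Nontrivial F]

lemma qinf_nonempty (T : E →L[ℂ] E) :
    ((fun v => (inner ℂ (T v) v : ℂ).re) '' Metric.sphere (0:E) 1).Nonempty := by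
  refine Set.Nonempty.image _ ?_
  exact NormedSpace.sphere_nonempty.2 zero_le_one

lemma le_qinf {T : E →L[ℂ] E} {c : ℝ} (h : ∀ v, c * ‖v‖ ^ 2 ≤ (inner ℂ (T v) v : ℂ).re) :
    c ≤ qinf T := by
  refine le_csInf (qinf_nonempty T) ?_
  rintro x ⟨v, hv, rfl⟩
  have hv1 : ‖v‖ = 1 := by simpa using hv
  have := h v
  rwa [hv1, one_pow, mul_one] at this

lemma abs_qinf_le (T : E →L[ℂ] E) : |qinf T| ≤ ‖T‖ := by
  obtain ⟨v, hv⟩ := NormedSpace.sphere_nonempty (E := E) (x := (0:E)) (r := 1) |>.2 zero_le_one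
  have hv1 : ‖v‖ = 1 := by simpa using hv
  rw [abs_le]
  constructor
  · refine le_csInf (qinf_nonempty T) ?_
    rintro x ⟨w, hw, rfl⟩
    have := abs_re_inner_le T w (by simpa using hw)
    linarith [neg_abs_le ((inner ℂ (T w) w : ℂ).re)]
  · exact (qinf_le T v hv1).trans ((le_abs_self _).trans (abs_re_inner_le T v hv1))

lemma qinf_mul_sq_le (T : E →L[ℂ] E) (v : E) :
    qinf T * ‖v‖ ^ 2 ≤ (inner ℂ (T v) v : ℂ).re := by
  rcases eq_or_ne v 0 with rfl | hv
  · simp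
  · have hn : (0:ℝ) < ‖v‖ := norm_pos_iff.2 hv
    set u : E := ((‖v‖:ℂ))⁻¹ • v with hu
    have hu1 : ‖u‖ = 1 := by
      rw [hu, norm_smul]
      simp [norm_inv, hn.ne']
    have key : (inner ℂ (T u) u : ℂ).re = ‖v‖⁻¹ * (‖v‖⁻¹ * (inner ℂ (T v) v : ℂ).re) := by
      rw [hu, _root_.map_smul, inner_smul_left, inner_smul_right]
      simp [← Complex.ofReal_inv, Complex.re_ofReal_mul]
    have h2 := qinf_le T u hu1
    rw [key] at h2
    calc qinf T * ‖v‖ ^ 2 ≤ (‖v‖⁻¹ * (‖v‖⁻¹ * (inner ℂ (T v) v : ℂ).re)) * ‖v‖ ^ 2 := by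
          have := sq_nonneg ‖v‖
          nlinarith
      _ = (inner ℂ (T v) v : ℂ).re := by
          field_simp

lemma qinf_le_add (T S : E →L[ℂ] E) : qinf T ≤ qinf S + ‖T - S‖ := by
  have : qinf T - ‖T - S‖ ≤ qinf S := by
    refine le_csInf (qinf_nonempty S) ?_
    rintro x ⟨v, hv, rfl⟩
    have hv1 : ‖v‖ = 1 := by simpa using hv
    have h1 : qinf T ≤ (inner ℂ (T v) v : ℂ).re := qinf_le T v hv1
    have h2 : (inner ℂ (T v) v : ℂ).re - (inner ℂ (S v) v : ℂ).re
        = (inner ℂ ((T - S) v) v : ℂ).re := by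
      simp [inner_sub_left]
    have h3 := abs_re_inner_le (T - S) v hv1
    rw [abs_le] at h3
    linarith [h3.2, (le_abs_self ((inner ℂ ((T - S) v) v : ℂ).re))]
  linarith

lemma lipschitzWith_qinf : LipschitzWith 1 (qinf : (E →L[ℂ] E) → ℝ) := by
  refine LipschitzWith.of_dist_le_mul fun T S => ?_
  rw [NNReal.coe_one, one_mul, Real.dist_eq, dist_eq_norm, abs_le]
  constructor
  · have := qinf_le_add S T
    have hn : ‖S - T‖ = ‖T - S‖ := by rw [← norm_neg]; congr 1; abel
    linarith [hn ▸ this]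
  · linarith [qinf_le_add T S]

lemma continuous_qinf_comp {M : ℝ → (E →L[ℂ] E)} (hM : Continuous M) :
    Continuous fun t => qinf (M t) :=
  lipschitzWith_qinf.continuous.comp hM

/-- key contraction estimate for `1 - c • T` -/
lemma one_sub_smul_norm_le (T : E →L[ℂ] E) {c : ℝ} (hc : 0 ≤ c) (hc1 : c * ‖T‖ ≤ 1)
    (v : E) :
    ‖((1 : E →L[ℂ] E) - (c:ℂ) • T) v‖ ≤ (1 - c * qinf T + c^2 * ‖T‖^2 / 2) * ‖v‖ := by
  set q := qinf T with hq
  have hqle : |q| ≤ ‖T‖ := abs_qinf_le T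
  have hd0 : 0 ≤ 1 - c * q + c^2 * ‖T‖^2 / 2 := by
    have h1 : c * q ≤ c * ‖T‖ := by
      have := (abs_le.1 hqle).2
      nlinarith
    nlinarith [sq_nonneg (c * ‖T‖)]
  have hsq : ‖((1 : E →L[ℂ] E) - (c:ℂ) • T) v‖ ^ 2
      ≤ ((1 - c * q + c^2 * ‖T‖^2 / 2) * ‖v‖) ^ 2 := by
    have expand : ‖((1 : E →L[ℂ] E) - (c:ℂ) • T) v‖ ^ 2
        = ‖v‖ ^ 2 - 2 * (c * (inner ℂ (T v) v : ℂ).re) + c^2 * ‖T v‖^2 := by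
      have : ((1 : E →L[ℂ] E) - (c:ℂ) • T) v = v - (c:ℂ) • T v := by
        simp [sub_apply, smul_apply]
      rw [this, norm_sub_sq (𝕜 := ℂ)]
      have h1 : RCLike.re (inner ℂ v ((c:ℂ) • T v) : ℂ) = c * (inner ℂ (T v) v : ℂ).re := by
        rw [inner_smul_right]
        show ((c:ℂ) * inner ℂ v (T v)).re = _
        rw [Complex.re_ofReal_mul]
        congr 1
        exact inner_re_symm (𝕜 := ℂ) v (T v)
      rw [h1, norm_smul]
      simp only [Complex.norm_real, mul_pow, sq_abs, Real.norm_eq_abs]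
    rw [expand]
    have h2 : q * ‖v‖^2 ≤ (inner ℂ (T v) v : ℂ).re := qinf_mul_sq_le T v
    have h3 : ‖T v‖ ≤ ‖T‖ * ‖v‖ := T.le_opNorm v
    have h4 : ‖T v‖^2 ≤ ‖T‖^2 * ‖v‖^2 := by nlinarith [norm_nonneg (T v), norm_nonneg T, norm_nonneg v]
    nlinarith [sq_nonneg ((c * q - c^2*‖T‖^2/2) * ‖v‖), sq_nonneg c, sq_nonneg ‖v‖]
  have := (pow_le_pow_iff_left₀ (norm_nonneg _) (by positivity) (by norm_num)).1 hsq
  exact this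
lemma factor_identity (M₁t : E →L[ℂ] E) (M₂t : F →L[ℂ] F) (P : E →L[ℂ] F) (c : ℝ) :
    P + (c:ℂ) • (M₂t ∘L P - P ∘L M₁t)
      = (((1 : F →L[ℂ] F) + (c:ℂ) • M₂t) ∘L P) ∘L ((1 : E →L[ℂ] E) - (c:ℂ) • M₁t)
        + (c:ℂ)^2 • ((M₂t ∘L P) ∘L M₁t) := by
  ext v
  simp only [add_apply, smul_apply, comp_apply, sub_apply, ContinuousLinearMap.one_apply, map_sub, _root_.map_smul,
    map_add, smul_sub, pow_two, mul_smul]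
  module


private lemma arith_aux (a₁ a₂ qA qB p c : ℝ) (ha₁0 : 0 ≤ a₁) (ha₂0 : 0 ≤ a₂)
    (hp : 0 ≤ p) (hc : 0 ≤ c) (hc1 : c ≤ 1)
    (hqa1 : -a₁ ≤ qA) (hqa2 : qA ≤ a₁) (hqb1 : -a₂ ≤ qB) (hqb2 : qB ≤ a₂) :
    (1 + c * qB + c^2 * a₂^2 / 2) * (p * (1 - c * qA + c^2 * a₁^2 / 2))
      + c^2 * (a₂ * p * a₁)
    ≤ (1 + c * (qB - qA)) * p
      + c^2 * ((a₁*a₂ + (1+a₂)*a₁^2/2 + (1+a₁)*a₂^2/2 + a₁^2*a₂^2/4 + a₂*a₁) * p) := by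
  have hprod : -(qA*qB) ≤ a₁*a₂ := by
    have habs : |qA*qB| ≤ a₁*a₂ := by
      rw [abs_mul]
      exact mul_le_mul (abs_le.2 ⟨hqa1, hqa2⟩) (abs_le.2 ⟨hqb1, hqb2⟩) (abs_nonneg _) ha₁0
    linarith [neg_abs_le (qA*qB), le_abs_self (-(qA*qB)), abs_neg (qA*qB)]
  have hc4 : c^4 ≤ c^2 := pow_le_pow_of_le_one hc hc1 (by norm_num)
  have key : (1 + c * qB + c^2 * a₂^2 / 2) * (1 - c * qA + c^2 * a₁^2 / 2)
      ≤ 1 + c*(qB - qA) + (c^2*(a₁*a₂) + (1+a₂)*(c^2*a₁^2/2)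
      + (c^2*a₂^2/2)*(1+a₁) + c^2*(a₁^2*a₂^2/4)) := by
    have e2 : (1 + c * qB + c^2 * a₂^2 / 2) * (1 - c * qA + c^2 * a₁^2 / 2)
        = (1 + c*(qB-qA) - c^2*(qA*qB)) + (1+c*qB)*(c^2*a₁^2/2)
        + (c^2*a₂^2/2)*(1 - c*qA) + c^4*(a₁^2*a₂^2/4) := by ring
    have hcb : c*qB ≤ a₂ := by nlinarith
    have hca : -(c*qA) ≤ a₁ := by nlinarith
    have b1 : (1+c*qB)*(c^2*a₁^2/2) ≤ (1+a₂)*(c^2*a₁^2/2) :=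
      mul_le_mul_of_nonneg_right (by linarith) (by positivity)
    have b2 : (c^2*a₂^2/2)*(1-c*qA) ≤ (c^2*a₂^2/2)*(1+a₁) :=
      mul_le_mul_of_nonneg_left (by linarith) (by positivity)
    have b3 : c^4*(a₁^2*a₂^2/4) ≤ c^2*(a₁^2*a₂^2/4) :=
      mul_le_mul_of_nonneg_right hc4 (by positivity)
    have b0 : -(c^2*(qA*qB)) ≤ c^2*(a₁*a₂) := by
      have h' := mul_le_mul_of_nonneg_left hprod (sq_nonneg c)
      have h'' : c^2 * -(qA*qB) = -(c^2*(qA*qB)) := by ring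
      rw [h''] at h'
      exact h'
    linarith [e2.le]
  calc (1 + c * qB + c^2 * a₂^2 / 2) * (p * (1 - c * qA + c^2 * a₁^2 / 2))
        + c^2 * (a₂ * p * a₁)
      = (1 + c * qB + c^2 * a₂^2 / 2) * (1 - c * qA + c^2 * a₁^2 / 2) * p
        + c^2 * (a₂ * a₁) * p := by ring
    _ ≤ (1 + c*(qB - qA) + (c^2*(a₁*a₂) + (1+a₂)*(c^2*a₁^2/2)
        + (c^2*a₂^2/2)*(1+a₁) + c^2*(a₁^2*a₂^2/4))) * p + c^2 * (a₂ * a₁) * p :=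
      add_le_add (mul_le_mul_of_nonneg_right key hp) le_rfl
    _ = (1 + c * (qB - qA)) * p
        + c^2 * ((a₁*a₂ + (1+a₂)*a₁^2/2 + (1+a₁)*a₂^2/2 + a₁^2*a₂^2/4 + a₂*a₁) * p) := by
      ring

/-- The per-point estimate `‖P + c•D‖ ≤ (1 + c(qB − qA))‖P‖ + c²K`. -/
lemma key_estimate (M₁t : E →L[ℂ] E) (M₂t : F →L[ℂ] F) (P : E →L[ℂ] F) {c : ℝ}
    (hc : 0 ≤ c) (hc1 : c ≤ 1) (h1 : c * ‖M₁t‖ ≤ 1) (h2 : c * ‖M₂t‖ ≤ 1) :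
    ‖P + (c:ℂ) • (M₂t ∘L P - P ∘L M₁t)‖
      ≤ (1 + c * ((-qinf (-M₂t)) - qinf M₁t)) * ‖P‖
        + c^2 * ((‖M₁t‖*‖M₂t‖ + (1+‖M₂t‖)*‖M₁t‖^2/2 + (1+‖M₁t‖)*‖M₂t‖^2/2
            + ‖M₁t‖^2*‖M₂t‖^2/4 + ‖M₂t‖*‖M₁t‖) * ‖P‖) := by
  have ha₁0 : (0:ℝ) ≤ ‖M₁t‖ := norm_nonneg _
  have ha₂0 : (0:ℝ) ≤ ‖M₂t‖ := norm_nonneg _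
  have hP0 : (0:ℝ) ≤ ‖P‖ := norm_nonneg _
  have hqa := abs_le.1 (abs_qinf_le M₁t)
  have hqb' : |qinf (-M₂t)| ≤ ‖M₂t‖ := by simpa using abs_qinf_le (-M₂t)
  have hqb : |(-qinf (-M₂t))| ≤ ‖M₂t‖ := by rw [abs_neg]; exact hqb'
  have hqble := abs_le.1 hqb
  have hdA0 : 0 ≤ 1 - c * qinf M₁t + c^2 * ‖M₁t‖^2 / 2 := by
    nlinarith [sq_nonneg (c*‖M₁t‖), mul_le_mul_of_nonneg_left hqa.2 hc]
  have hdB0 : 0 ≤ 1 + c * (-qinf (-M₂t)) + c^2 * ‖M₂t‖^2 / 2 := by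
    nlinarith [sq_nonneg (c*‖M₂t‖), mul_le_mul_of_nonneg_left hqble.1 hc]
  have hBv : ∀ w : F, ‖((1 : F →L[ℂ] F) + (c:ℂ) • M₂t) w‖
      ≤ (1 + c * (-qinf (-M₂t)) + c^2 * ‖M₂t‖^2 / 2) * ‖w‖ := by
    intro w
    have h := one_sub_smul_norm_le (-M₂t) hc (by rwa [norm_neg]) w
    rw [smul_neg, sub_neg_eq_add, norm_neg] at h
    refine h.trans (le_of_eq ?_)
    ring
  have hAv : ∀ v : E, ‖((1 : E →L[ℂ] E) - (c:ℂ) • M₁t) v‖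
      ≤ (1 - c * qinf M₁t + c^2 * ‖M₁t‖^2 / 2) * ‖v‖ := fun v =>
    one_sub_smul_norm_le M₁t hc h1 v
  have hcomp : ‖(((1 : F →L[ℂ] F) + (c:ℂ) • M₂t) ∘L P) ∘L ((1 : E →L[ℂ] E) - (c:ℂ) • M₁t)‖
      ≤ (1 + c * (-qinf (-M₂t)) + c^2 * ‖M₂t‖^2 / 2)
        * (‖P‖ * (1 - c * qinf M₁t + c^2 * ‖M₁t‖^2 / 2)) := by
    refine opNorm_le_bound _ (by positivity) fun v => ?_
    rw [comp_apply, comp_apply]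
    have s1 : ‖P (((1 : E →L[ℂ] E) - (c:ℂ) • M₁t) v)‖
        ≤ ‖P‖ * ((1 - c * qinf M₁t + c^2 * ‖M₁t‖^2 / 2) * ‖v‖) :=
      (P.le_opNorm _).trans (mul_le_mul_of_nonneg_left (hAv v) hP0)
    calc ‖((1 : F →L[ℂ] F) + (c:ℂ) • M₂t) (P (((1 : E →L[ℂ] E) - (c:ℂ) • M₁t) v))‖
        ≤ (1 + c * (-qinf (-M₂t)) + c^2 * ‖M₂t‖^2 / 2)
          * ‖P (((1 : E →L[ℂ] E) - (c:ℂ) • M₁t) v)‖ := hBv _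
      _ ≤ (1 + c * (-qinf (-M₂t)) + c^2 * ‖M₂t‖^2 / 2)
          * (‖P‖ * ((1 - c * qinf M₁t + c^2 * ‖M₁t‖^2 / 2) * ‖v‖)) :=
          mul_le_mul_of_nonneg_left s1 hdB0
      _ = (1 + c * (-qinf (-M₂t)) + c^2 * ‖M₂t‖^2 / 2)
          * (‖P‖ * (1 - c * qinf M₁t + c^2 * ‖M₁t‖^2 / 2)) * ‖v‖ := by ring
  have hMPM : ‖(M₂t ∘L P) ∘L M₁t‖ ≤ ‖M₂t‖ * ‖P‖ * ‖M₁t‖ := by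
    calc ‖(M₂t ∘L P) ∘L M₁t‖ ≤ ‖M₂t ∘L P‖ * ‖M₁t‖ := opNorm_comp_le _ _
      _ ≤ ‖M₂t‖ * ‖P‖ * ‖M₁t‖ := mul_le_mul_of_nonneg_right (opNorm_comp_le _ _) ha₁0
  have hsm : ‖((c:ℂ))^2 • ((M₂t ∘L P) ∘L M₁t)‖ ≤ c^2 * (‖M₂t‖ * ‖P‖ * ‖M₁t‖) := by
    rw [norm_smul ((c:ℂ)^2) ((M₂t ∘L P) ∘L M₁t)]
    have hn : ‖((c:ℂ))^2‖ = c^2 := by rw [norm_pow, Complex.norm_real, Real.norm_eq_abs, sq_abs]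
    rw [hn]
    exact mul_le_mul_of_nonneg_left hMPM (sq_nonneg c)
  have hfin : ‖P + (c:ℂ) • (M₂t ∘L P - P ∘L M₁t)‖
      ≤ (1 + c * (-qinf (-M₂t)) + c^2 * ‖M₂t‖^2 / 2)
        * (‖P‖ * (1 - c * qinf M₁t + c^2 * ‖M₁t‖^2 / 2))
        + c^2 * (‖M₂t‖ * ‖P‖ * ‖M₁t‖) := by
    rw [factor_identity]
    exact (norm_add_le _ _).trans (add_le_add hcomp hsm)
  exact hfin.trans (arith_aux ‖M₁t‖ ‖M₂t‖ (qinf M₁t) (-qinf (-M₂t)) ‖P‖ c ha₁0 ha₂0 hP0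
    hc hc1 hqa.1 hqa.2 hqble.1 hqble.2)
lemma key_estimate' (M₁t : E →L[ℂ] E) (M₂t : F →L[ℂ] F) (P : E →L[ℂ] F) :
    ∃ Kc : ℝ, 0 ≤ Kc ∧ ∀ c : ℝ, 0 ≤ c → c ≤ 1 → c * ‖M₁t‖ ≤ 1 → c * ‖M₂t‖ ≤ 1 →
      ‖P + (c:ℂ) • (M₂t ∘L P - P ∘L M₁t)‖
        ≤ (1 + c * ((-qinf (-M₂t)) - qinf M₁t)) * ‖P‖ + c^2 * Kc := by
  refine ⟨(‖M₁t‖*‖M₂t‖ + (1+‖M₂t‖)*‖M₁t‖^2/2 + (1+‖M₁t‖)*‖M₂t‖^2/2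
      + ‖M₁t‖^2*‖M₂t‖^2/4 + ‖M₂t‖*‖M₁t‖) * ‖P‖, by positivity, ?_⟩
  intro c hc hc1 h1 h2
  exact key_estimate M₁t M₂t P hc hc1 h1 h2

lemma exists_delta (a1 a2 Kc ε : ℝ) (ha1 : 0 ≤ a1) (ha2 : 0 ≤ a2) (hK : 0 ≤ Kc)
    (hε : 0 < ε) :
    ∃ δ : ℝ, 0 < δ ∧ ∀ c : ℝ, 0 < c → c < δ →
      c ≤ 1 ∧ c * a1 ≤ 1 ∧ c * a2 ≤ 1 ∧ c * Kc ≤ ε := by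
  refine ⟨min 1 (min (1/(a1+1)) (min (1/(a2+1)) (ε/(Kc+1)))), by positivity, ?_⟩
  intro c hc0 hcδ
  simp only [lt_min_iff] at hcδ
  obtain ⟨hd1, hd2, hd3, hd4⟩ := hcδ
  refine ⟨hd1.le, ?_, ?_, ?_⟩
  · have h := (lt_div_iff₀ (show (0:ℝ) < a1+1 by positivity)).1 hd2
    nlinarith
  · have h := (lt_div_iff₀ (show (0:ℝ) < a2+1 by positivity)).1 hd3
    nlinarith
  · have h := (lt_div_iff₀ (show (0:ℝ) < Kc+1 by positivity)).1 hd4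
    nlinarith

set_option maxHeartbeats 1000000 in
lemma slope_est (M₁t : E →L[ℂ] E) (M₂t : F →L[ℂ] F) (Φ : ℝ → (E →L[ℂ] F)) (t : ℝ)
    (hΦ : HasDerivAt Φ (M₂t ∘L Φ t - Φ t ∘L M₁t) t) (r : ℝ)
    (hr : ((-qinf (-M₂t)) - qinf M₁t) * ‖Φ t‖ < r) :
    ∀ᶠ z in nhdsWithin t (Set.Ioi t), slope (fun s => ‖Φ s‖) t z < r := by
  obtain ⟨Kc, hKc0, hKc⟩ := key_estimate' M₁t M₂t (Φ t)
  have hε0 : 0 < (r - ((-qinf (-M₂t)) - qinf M₁t) * ‖Φ t‖)/3 := by linarith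
  obtain ⟨δ, hδ0, hδprop⟩ := exists_delta ‖M₁t‖ ‖M₂t‖ (Kc + 1)
    ((r - ((-qinf (-M₂t)) - qinf M₁t) * ‖Φ t‖)/3) (norm_nonneg _) (norm_nonneg _)
    (by linarith) hε0
  have hlo : ∀ᶠ z in nhds t,
      ‖Φ z - Φ t - (z - t) • (M₂t ∘L Φ t - Φ t ∘L M₁t)‖
        ≤ ((r - ((-qinf (-M₂t)) - qinf M₁t) * ‖Φ t‖)/3) * ‖z - t‖ := by
    have := (hasDerivAt_iff_isLittleO.1 hΦ).bound hε0
    simpa using this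
  have hIoo : Set.Ioo t (t + δ) ∈ nhdsWithin t (Set.Ioi t) :=
    Ioo_mem_nhdsGT_of_mem ⟨le_refl t, by linarith⟩
  filter_upwards [hIoo, nhdsWithin_le_nhds hlo] with z hz hzlo
  obtain ⟨hz1, hz2⟩ := hz
  obtain ⟨hc1, hcM1, hcM2, hcK⟩ := hδprop (z - t) (by linarith) (by linarith)
  have hc0 : 0 < z - t := by linarith
  have hsmul : ((z - t : ℝ):ℂ) • (M₂t ∘L Φ t - Φ t ∘L M₁t)
      = (z - t : ℝ) • (M₂t ∘L Φ t - Φ t ∘L M₁t) :=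
    (RCLike.real_smul_eq_coe_smul (K := ℂ) _ _).symm
  have hkey := hKc (z - t) hc0.le hc1 hcM1 hcM2
  rw [hsmul] at hkey
  have htri : ‖Φ z‖ ≤ ‖Φ t + (z - t) • (M₂t ∘L Φ t - Φ t ∘L M₁t)‖
      + ‖Φ z - Φ t - (z - t) • (M₂t ∘L Φ t - Φ t ∘L M₁t)‖ := by
    have h := norm_sub_norm_le (Φ z) (Φ t + (z - t) • (M₂t ∘L Φ t - Φ t ∘L M₁t))
    rw [sub_add_eq_sub_sub] at h
    linarith
  have hnz : ‖(z - t : ℝ)‖ = z - t := by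
    rw [Real.norm_eq_abs, abs_of_pos hc0]
  rw [hnz] at hzlo
  have hbound : ‖Φ z‖ ≤ (1 + (z - t) * ((-qinf (-M₂t)) - qinf M₁t)) * ‖Φ t‖
      + (z - t)^2 * Kc + ((r - ((-qinf (-M₂t)) - qinf M₁t) * ‖Φ t‖)/3) * (z - t) := by
    linarith
  rw [slope_def_field, div_lt_iff₀ hc0]
  -- final arithmetic
  have hsq : (z - t)^2 * Kc ≤ (z - t) * ((r - ((-qinf (-M₂t)) - qinf M₁t) * ‖Φ t‖)/3) := by
    have h1 : (z - t) * Kc ≤ (z - t) * (Kc + 1) := by nlinarith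
    nlinarith
  nlinarith [hbound, hsq, hc0]
/-- main Gronwall-type argument, with `ε` slack. -/
lemma main_est (M₁ : ℝ → (E →L[ℂ] E)) (M₂ : ℝ → (F →L[ℂ] F))
    (hM₁ : Continuous M₁) (hM₂ : Continuous M₂)
    (Φ : ℝ → (E →L[ℂ] F)) (hΦ : ∀ t, HasDerivAt Φ (M₂ t ∘L Φ t - Φ t ∘L M₁ t) t)
    (y x : ℝ) (hyx : y < x) {ε : ℝ} (hε : 0 < ε) :
    ‖Φ x‖ ≤ (‖Φ y‖ + ε) * Real.exp ((∫ s in y..x, ((-qinf (-M₂ s)) - qinf (M₁ s)))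
      + ε * (x - y)) := by
  have hg : Continuous fun s => (-qinf (-M₂ s)) - qinf (M₁ s) :=
    ((continuous_qinf_comp hM₂.neg).neg).sub (continuous_qinf_comp hM₁)
  have hΦc : Continuous Φ := continuous_iff_continuousAt.2 fun t => (hΦ t).continuousAt
  have hGd : ∀ t : ℝ, HasDerivAt (fun u => ∫ s in y..u, ((-qinf (-M₂ s)) - qinf (M₁ s)))
      ((-qinf (-M₂ t)) - qinf (M₁ t)) t := fun t =>
    intervalIntegral.integral_hasDerivAt_right (hg.intervalIntegrable _ _)
      (hg.stronglyMeasurableAtFilter _ _) hg.continuousAt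
  set Bf : ℝ → ℝ := fun t => (‖Φ y‖ + ε)
    * Real.exp ((∫ s in y..t, ((-qinf (-M₂ s)) - qinf (M₁ s))) + ε * (t - y)) with hBf
  have hBpos : ∀ t, 0 < Bf t := fun t => by
    rw [hBf]; positivity
  have hBd : ∀ t : ℝ, HasDerivAt Bf
      ((((-qinf (-M₂ t)) - qinf (M₁ t)) + ε) * Bf t) t := by
    intro t
    have h1 : HasDerivAt (fun u => (∫ s in y..u, ((-qinf (-M₂ s)) - qinf (M₁ s)))
        + ε * (u - y)) (((-qinf (-M₂ t)) - qinf (M₁ t)) + ε) t := by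
      have h2 : HasDerivAt (fun u : ℝ => ε * (u - y)) ε t := by
        simpa using ((hasDerivAt_id t).sub_const y).const_mul ε
      exact (hGd t).add h2
    have h3 := (h1.exp).const_mul (‖Φ y‖ + ε)
    exact h3.congr_deriv (by simp only [hBf]; ring)
  have key := image_le_of_liminf_slope_right_lt_deriv_boundary
    (f := fun t => ‖Φ t‖) (f' := fun t => (((-qinf (-M₂ t)) - qinf (M₁ t))) * ‖Φ t‖)
    (a := y) (b := x) (B := Bf)
    (B' := fun t => ((((-qinf (-M₂ t)) - qinf (M₁ t))) + ε) * Bf t)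
    ((continuous_norm.comp hΦc).continuousOn)
    (fun t _ r hr => ((slope_est (M₁ t) (M₂ t) Φ t (hΦ t) r hr).frequently))
    (by
      rw [hBf]
      simp only [intervalIntegral.integral_same, sub_self, mul_zero, add_zero, Real.exp_zero,
        mul_one]
      linarith)
    (fun t => hBd t)
    (by
      intro t _ hft
      rw [hft]
      have := hBpos t
      nlinarith)
  exact key (Set.right_mem_Icc.2 hyx.le)
end helpers

/-- Weakened spectral gap with `L¹` perturbation: if
`min σ(Re M₁)(x) - max σ(Re M₂)(x) ≥ η + α(x)` with `∫|α| ≤ C₁`, then solutions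
of `Φ' = M₂(x)Φ - ΦM₁(x)` satisfy `‖Φ(x)‖ ≤ C e^{C₁} e^{-η(x-y)} ‖Φ(y)‖` for
`x > y`. -/
theorem stmt9 (k m : ℕ) (η C₁ : ℝ) (hη : 0 < η) (hC₁ : 0 ≤ C₁)
    (M₁ : ℝ → (EuclideanSpace ℂ (Fin k) →L[ℂ] EuclideanSpace ℂ (Fin k)))
    (M₂ : ℝ → (EuclideanSpace ℂ (Fin m) →L[ℂ] EuclideanSpace ℂ (Fin m)))
    (hM₁ : Continuous M₁) (hM₂ : Continuous M₂)
    (a b α : ℝ → ℝ)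
    (hα : MeasureTheory.Integrable α)
    (hαL1 : (∫ x, |α x|) ≤ C₁)
    (ha : ∀ x v, a x * ‖v‖ ^ 2 ≤ (inner ℂ (M₁ x v) v : ℂ).re)
    (hb : ∀ x w, (inner ℂ (M₂ x w) w : ℂ).re ≤ b x * ‖w‖ ^ 2)
    (hgap : ∀ x, η + α x ≤ a x - b x) :
    ∃ C : ℝ, 0 < C ∧
      ∀ Φ : ℝ → (EuclideanSpace ℂ (Fin k) →L[ℂ] EuclideanSpace ℂ (Fin m)),
        (∀ x, HasDerivAt Φ (M₂ x ∘L Φ x - Φ x ∘L M₁ x) x) →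
        ∀ y x : ℝ, y < x →
          ‖Φ x‖ ≤ C * Real.exp C₁ * Real.exp (-η * (x - y)) * ‖Φ y‖ := by
  refine ⟨1, one_pos, ?_⟩
  intro Φ hΦ y x hyx
  have hRHS0 : 0 ≤ 1 * Real.exp C₁ * Real.exp (-η * (x - y)) * ‖Φ y‖ := by positivity
  rcases Nat.eq_zero_or_pos k with hk | hk
  · subst hk
    have hΦ0 : Φ x = 0 := by
      ext v
      have hv : v = 0 := by ext i; exact i.elim0
      rw [hv]
      simp
    rw [hΦ0]
    simpa using hRHS0
  rcases Nat.eq_zero_or_pos m with hm | hm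
  · subst hm
    have hΦ0 : Φ x = 0 := by
      ext v i
      exact i.elim0
    rw [hΦ0]
    simpa using hRHS0
  haveI : Nontrivial (EuclideanSpace ℂ (Fin k)) := by
    refine ⟨EuclideanSpace.single (⟨0, hk⟩ : Fin k) (1:ℂ), 0, ?_⟩
    intro h
    have := congrArg (fun f => f (⟨0, hk⟩ : Fin k)) h
    simp [EuclideanSpace.single_apply] at this
  haveI : Nontrivial (EuclideanSpace ℂ (Fin m)) := by
    refine ⟨EuclideanSpace.single (⟨0, hm⟩ : Fin m) (1:ℂ), 0, ?_⟩
    intro h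
    have := congrArg (fun f => f (⟨0, hm⟩ : Fin m)) h
    simp [EuclideanSpace.single_apply] at this
  -- pointwise bound on the continuous spectral gap function
  have hgle : ∀ t : ℝ, (-qinf (-M₂ t)) - qinf (M₁ t) ≤ -η + |α t| := by
    intro t
    have h1 : a t ≤ qinf (M₁ t) := le_qinf (ha t)
    have h2 : -b t ≤ qinf (-(M₂ t)) := by
      refine le_qinf fun w => ?_
      have := hb t w
      have hne : (inner ℂ ((-(M₂ t)) w) w : ℂ).re = -(inner ℂ (M₂ t w) w : ℂ).re := by
        simp [inner_neg_left]
      rw [hne]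
      linarith
    have h3 := hgap t
    have h4 : -α t ≤ |α t| := neg_le_abs _
    linarith
  -- integral bound
  have hg : Continuous fun s => (-qinf (-M₂ s)) - qinf (M₁ s) :=
    ((continuous_qinf_comp hM₂.neg).neg).sub (continuous_qinf_comp hM₁)
  have hint : (∫ s in y..x, ((-qinf (-M₂ s)) - qinf (M₁ s)))
      ≤ C₁ + -η * (x - y) := by
    have hmono : (∫ s in y..x, ((-qinf (-M₂ s)) - qinf (M₁ s)))
        ≤ ∫ s in y..x, (-η + |α s|) := by
      refine intervalIntegral.integral_mono_on hyx.le (hg.intervalIntegrable _ _)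
        (IntervalIntegrable.add (intervalIntegrable_const) hα.abs.intervalIntegrable)
        fun s _ => hgle s
    have hsplit : (∫ s in y..x, (-η + |α s|))
        = -η * (x - y) + ∫ s in y..x, |α s| := by
      rw [intervalIntegral.integral_add (intervalIntegrable_const) hα.abs.intervalIntegrable,
        intervalIntegral.integral_const]
      rw [smul_eq_mul]
      ring
    have habs : (∫ s in y..x, |α s|) ≤ C₁ := by
      rw [intervalIntegral.integral_of_le hyx.le]
      refine le_trans ?_ hαL1
      exact setIntegral_le_integral hα.abs (Eventually.of_forall fun s => abs_nonneg _)
    linarith [hmono, hsplit.le, hsplit.ge]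
  -- take the limit ε → 0⁺
  have hεbound : ∀ ε : ℝ, 0 < ε → ‖Φ x‖
      ≤ (‖Φ y‖ + ε) * Real.exp (C₁ + -η * (x - y) + ε * (x - y)) := by
    intro ε hε
    refine (main_est M₁ M₂ hM₁ hM₂ Φ hΦ y x hyx hε).trans ?_
    have h0 : 0 ≤ ‖Φ y‖ + ε := by positivity
    refine mul_le_mul_of_nonneg_left (Real.exp_le_exp.2 ?_) h0
    linarith
  have hten : Tendsto (fun ε : ℝ => (‖Φ y‖ + ε) * Real.exp (C₁ + -η * (x - y) + ε * (x - y)))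
      (nhdsWithin 0 (Set.Ioi 0))
      (nhds ((‖Φ y‖ + 0) * Real.exp (C₁ + -η * (x - y) + 0 * (x - y)))) := by
    have hcont : Continuous fun ε : ℝ =>
        (‖Φ y‖ + ε) * Real.exp (C₁ + -η * (x - y) + ε * (x - y)) := by
      fun_prop
    exact (hcont.tendsto 0).mono_left nhdsWithin_le_nhds
  have hfin : ‖Φ x‖ ≤ (‖Φ y‖ + 0) * Real.exp (C₁ + -η * (x - y) + 0 * (x - y)) := by
    refine ge_of_tendsto hten ?_
    filter_upwards [self_mem_nhdsWithin] with ε hε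
    exact hεbound ε hε
  calc ‖Φ x‖ ≤ (‖Φ y‖ + 0) * Real.exp (C₁ + -η * (x - y) + 0 * (x - y)) := hfin
    _ = ‖Φ y‖ * (Real.exp C₁ * Real.exp (-η * (x - y))) := by
        rw [add_zero, zero_mul, add_zero, Real.exp_add]
    _ = 1 * Real.exp C₁ * Real.exp (-η * (x - y)) * ‖Φ y‖ := by ring
end
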